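/- arXiv:1701.07203 — 5 statements merged into one kernel-verified Lean document; each statement's English description precedes it below -/
import Mathlib

section
/- Let p ∈ (0,1) and let d ∈ ℕ satisfy d > (1−p)/p. Let X be a binomial random variable with parameters d and p. Define the bias-corrected plug-in univariate risk minimizer T(X) = X²/(p(X + 1 − p)) + (1−p)/p. Then E[(T(X) − d)²] < E[(X/p − d)²] = (1−p)d/p; that is, the estimator T(X) of d has strictly smaller quadratic risk than the method of moments estimator X/p. -/
open MeasureTheory ProbabilityTheory Finset

namespace Stmt3Aux

/-- binomial weight -/
noncomputable def W (p q : ℝ) (n k : ℕ) : ℝ := (n.choose k : ℝ) * p ^ k * q ^ (n - k)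

lemma W_sum (p q : ℝ) (hpq : p + q = 1) (n : ℕ) :
    ∑ k ∈ range (n+1), W p q n k = 1 := by
  have h := add_pow p q n
  rw [hpq, one_pow] at h
  rw [h]
  exact Finset.sum_congr rfl fun k _ => by rw [W]; ring

lemma T1 (p q : ℝ) (n : ℕ) (f : ℕ → ℝ) :
    ∑ k ∈ range (n+1), (k : ℝ) * W p q n k * f k
      = (n : ℝ) * p * ∑ j ∈ range n, W p q (n-1) j * f (j+1) := by
  cases n with
  | zero => simp
  | succ m =>
    rw [Finset.sum_range_succ']
    simp only [W, Nat.cast_zero, zero_mul, add_zero, Nat.add_sub_cancel]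
    rw [Finset.mul_sum]
    refine Finset.sum_congr rfl fun k hk => ?_
    have hc' : ((m+1).choose (k+1) : ℝ) * ((k:ℝ)+1) = ((m:ℝ) + 1) * (m.choose k : ℝ) := by
      exact_mod_cast congrArg (Nat.cast : ℕ → ℝ) (Nat.add_one_mul_choose_eq m k).symm
    have hsub : m + 1 - (k+1) = m - k := by omega
    rw [hsub]
    push_cast
    linear_combination (p ^ (k + 1) * q ^ (m - k) * f (k + 1)) * hc'

lemma T2 (p q : ℝ) (n : ℕ) (f : ℕ → ℝ) :
    ∑ k ∈ range (n+1), ((n : ℝ) - (k : ℝ)) * W p q n k * f k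
      = (n : ℝ) * q * ∑ j ∈ range n, W p q (n-1) j * f j := by
  cases n with
  | zero => simp
  | succ m =>
    rw [Finset.sum_range_succ]
    simp only [W, Nat.add_sub_cancel]
    rw [Finset.mul_sum]
    push_cast
    rw [sub_self, zero_mul, zero_mul, add_zero]
    refine Finset.sum_congr rfl fun k hk => ?_
    have hk' : k ≤ m := Nat.lt_succ_iff.mp (Finset.mem_range.mp hk)
    have hc : (m.choose k) * (m + 1) = (m + 1).choose k * (m + 1 - k) := Nat.choose_mul_succ_eq m k
    have hc' : (m.choose k : ℝ) * ((m:ℝ) + 1) = ((m+1).choose k : ℝ) * ((m:ℝ) + 1 - (k:ℝ)) := by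
      have := congrArg (Nat.cast : ℕ → ℝ) hc
      push_cast [Nat.cast_sub (by omega : k ≤ m + 1)] at this
      linarith [this]
    have hsub : m + 1 - k = (m - k) + 1 := by omega
    rw [hsub, pow_succ]
    linear_combination (-(p ^ k * q ^ (m - k) * q * f k)) * hc'

lemma T3 (p q : ℝ) (n : ℕ) (hn : 0 < n) (f : ℕ → ℝ) :
    ∑ k ∈ range (n+1), W p q n k * f k
      = p * ∑ j ∈ range n, W p q (n-1) j * f (j+1)
        + q * ∑ j ∈ range n, W p q (n-1) j * f j := by
  have hn' : (n : ℝ) ≠ 0 := Nat.cast_ne_zero.mpr hn.ne'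
  have h : (n : ℝ) * ∑ k ∈ range (n+1), W p q n k * f k
      = (n:ℝ) * p * ∑ j ∈ range n, W p q (n-1) j * f (j+1)
        + (n:ℝ) * q * ∑ j ∈ range n, W p q (n-1) j * f j := by
    rw [← T1 p q n f, ← T2 p q n f, Finset.mul_sum, ← Finset.sum_add_distrib]
    exact Finset.sum_congr rfl fun k _ => by ring
  apply mul_left_cancel₀ hn'
  rw [h]; ring

/-- mean -/
lemma E1 (p q : ℝ) (hpq : p + q = 1) (n : ℕ) :
    ∑ k ∈ range (n+1), (k : ℝ) * W p q n k = (n : ℝ) * p := by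
  have h := T1 p q n (fun _ => 1)
  simp only [mul_one] at h
  rw [h]
  cases n with
  | zero => simp
  | succ m => rw [Nat.add_sub_cancel, W_sum p q hpq m, mul_one]

/-- second moment helper -/
lemma E2 (p q : ℝ) (hpq : p + q = 1) (n : ℕ) :
    ∑ k ∈ range (n+1), (k : ℝ)^2 * W p q n k = (n : ℝ) * p * (((n:ℝ) - 1) * p + 1) := by
  have h := T1 p q n (fun j => (j : ℝ))
  have h0 : ∑ k ∈ range (n+1), (k : ℝ)^2 * W p q n k
      = ∑ k ∈ range (n+1), (k : ℝ) * W p q n k * (fun j => (j:ℝ)) k :=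
    Finset.sum_congr rfl fun k _ => by ring
  rw [h0, h]
  cases n with
  | zero => simp
  | succ m =>
    simp only [Nat.add_sub_cancel]
    have hs : ∑ j ∈ range (m+1), W p q m j * ((j+1 : ℕ):ℝ)
        = ∑ j ∈ range (m+1), ((j:ℝ) * W p q m j + W p q m j) :=
      Finset.sum_congr rfl fun j _ => by push_cast; ring
    rw [hs, Finset.sum_add_distrib, E1 p q hpq m, W_sum p q hpq m]
    push_cast
    ring

/-- MME risk -/
lemma sum_A (p q : ℝ) (hp : p ≠ 0) (hpq : p + q = 1) (n : ℕ) :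
    ∑ k ∈ range (n+1), ((k:ℝ)/p - (n:ℝ))^2 * W p q n k = q * (n:ℝ) / p := by
  have expand : ∀ k ∈ range (n+1), ((k:ℝ)/p - (n:ℝ))^2 * W p q n k
      = (1/p^2) * ((k:ℝ)^2 * W p q n k) - (2*(n:ℝ)/p) * ((k:ℝ) * W p q n k)
        + (n:ℝ)^2 * W p q n k := fun k _ => by field_simp; ring
  rw [Finset.sum_congr rfl expand]
  rw [Finset.sum_add_distrib, Finset.sum_sub_distrib, ← Finset.mul_sum, ← Finset.mul_sum,
    ← Finset.mul_sum, E2 p q hpq n, E1 p q hpq n, W_sum p q hpq n]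
  have hq : q = 1 - p := by linarith
  subst hq
  field_simp
  ring

/-- The key strict inequality between the risks, at the level of sums. -/
lemma key {p q : ℝ} (hp : 0 < p) (hq : 0 < q) (hpq : p + q = 1) (d : ℕ)
    (hd0 : 0 < d) (hd : q < (d:ℝ) * p) :
    ∑ k ∈ range (d+1), ((k:ℝ)^2/(p*((k:ℝ)+q)) + q/p - (d:ℝ))^2 * W p q d k
      < ∑ k ∈ range (d+1), ((k:ℝ)/p - (d:ℝ))^2 * W p q d k := by
  have hm : ∀ k : ℕ, (0:ℝ) < (k:ℝ) + q := fun k => by positivity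
  have hm1 : ∀ k : ℕ, (0:ℝ) < (k:ℝ) + 1 + q := fun k => by positivity
  set S := ∑ j ∈ range d, W p q (d-1) j * (1/(((j:ℝ)+q)*((j:ℝ)+1+q))) with hS_def
  have hWpos : ∀ j ∈ range d, 0 < W p q (d-1) j := by
    intro j hj
    have hj' : j ≤ d - 1 := by have := Finset.mem_range.mp hj; omega
    have : 0 < (d-1).choose j := Nat.choose_pos hj'
    have : (0:ℝ) < ((d-1).choose j : ℝ) := by exact_mod_cast this
    unfold W
    positivity
  have hS : 0 < S := by
    refine Finset.sum_pos (fun j hj => ?_) ⟨0, Finset.mem_range.mpr hd0⟩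
    have := hWpos j hj
    have h1 := hm j
    have h2 := hm1 j
    positivity
  -- B identity
  have hB : ∑ k ∈ range (d+1), ((k:ℝ) - (d:ℝ)*p) * W p q d k * (1/((k:ℝ)+q))
      = -((d:ℝ)*p*q*S) := by
    have split : ∑ k ∈ range (d+1), ((k:ℝ) - (d:ℝ)*p) * W p q d k * (1/((k:ℝ)+q))
        = (∑ k ∈ range (d+1), (k:ℝ) * W p q d k * (1/((k:ℝ)+q)))
          - (d:ℝ)*p * (∑ k ∈ range (d+1), W p q d k * (1/((k:ℝ)+q))) := by
      rw [Finset.mul_sum, ← Finset.sum_sub_distrib]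
      exact Finset.sum_congr rfl fun k _ => by ring
    rw [split, T1 p q d (fun k => 1/((k:ℝ)+q)), T3 p q d hd0 (fun k => 1/((k:ℝ)+q))]
    have hdiffsum : ∑ j ∈ range d, W p q (d-1) j * (1/(((j+1:ℕ):ℝ)+q))
        - ∑ j ∈ range d, W p q (d-1) j * (1/((j:ℝ)+q)) = -S := by
      rw [hS_def, ← Finset.sum_sub_distrib, ← Finset.sum_neg_distrib]
      refine Finset.sum_congr rfl fun j _ => ?_
      have h1 := (hm j).ne'
      have h2 := (hm1 j).ne'
      push_cast
      field_simp
      ring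
    have h1p : (1:ℝ) - p = q := by linarith
    set SA := ∑ j ∈ range d, W p q (d-1) j * (1/(((j+1:ℕ):ℝ)+q))
    set SB := ∑ j ∈ range d, W p q (d-1) j * (1/((j:ℝ)+q))
    have hthis : SA - SB = -S := hdiffsum
    linear_combination ((d:ℝ)*p*q) * hthis + ((d:ℝ)*p*SA) * h1p
  -- A bound
  have hA : ∑ k ∈ range (d+1), W p q d k * (1/((k:ℝ)+q)^2) ≤ 2 * S := by
    rw [T3 p q d hd0 (fun k => 1/((k:ℝ)+q)^2)]
    have hsum2 : 2 * S = ∑ j ∈ range d,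
        (2 * (W p q (d-1) j * (1/(((j:ℝ)+q)*((j:ℝ)+1+q))))) := by
      rw [hS_def, Finset.mul_sum]
    rw [hsum2, Finset.mul_sum, Finset.mul_sum, ← Finset.sum_add_distrib]
    refine Finset.sum_le_sum fun j hj => ?_
    have hW := (hWpos j hj).le
    have h1 := hm j
    have h2 := hm1 j
    have hscalar : p * (1/(((j+1:ℕ):ℝ)+q)^2) + q * (1/((j:ℝ)+q)^2)
        ≤ 2 * (1/(((j:ℝ)+q)*((j:ℝ)+1+q))) := by
      push_cast
      rw [mul_one_div, mul_one_div, mul_one_div, div_add_div _ _ (by positivity) (by positivity),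
        div_le_div_iff₀ (by positivity) (by positivity)]
      have hx : (0:ℝ) ≤ (j:ℝ) := Nat.cast_nonneg j
      have h5 : p * ((j:ℝ)+q)^2 + q * ((j:ℝ)+1+q)^2 ≤ 2*(((j:ℝ)+q) * ((j:ℝ)+1+q)) := by
        nlinarith [mul_pos hp hq, sq_nonneg ((j:ℝ)), hx]
      nlinarith [mul_le_mul_of_nonneg_right h5 (mul_pos h1 h2).le]
    calc p * (W p q (d-1) j * (1/(((j+1:ℕ):ℝ)+q)^2)) + q * (W p q (d-1) j * (1/((j:ℝ)+q)^2))
        = W p q (d-1) j * (p * (1/(((j+1:ℕ):ℝ)+q)^2) + q * (1/((j:ℝ)+q)^2)) := by ring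
      _ ≤ W p q (d-1) j * (2 * (1/(((j:ℝ)+q)*((j:ℝ)+1+q)))) := by
          exact mul_le_mul_of_nonneg_left hscalar hW
      _ = 2 * (W p q (d-1) j * (1/(((j:ℝ)+q)*((j:ℝ)+1+q)))) := by ring
  -- per-term decomposition
  have hdiff : ∀ k ∈ range (d+1),
      ((k:ℝ)^2/(p*((k:ℝ)+q)) + q/p - (d:ℝ))^2 * W p q d k
        = ((k:ℝ)/p - (d:ℝ))^2 * W p q d k
          + ((q^2/p^2) * q^2 * (W p q d k * (1/((k:ℝ)+q)^2))
            + (q^2/p^2) * 2 * (((k:ℝ) - (d:ℝ)*p) * W p q d k * (1/((k:ℝ)+q)))) := by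
    intro k _
    have h1 := (hm k).ne'
    field_simp
    ring
  rw [Finset.sum_congr rfl hdiff, Finset.sum_add_distrib, Finset.sum_add_distrib,
    ← Finset.mul_sum, ← Finset.mul_sum]
  have hneg : (q^2/p^2) * q^2 * (∑ k ∈ range (d+1), W p q d k * (1/((k:ℝ)+q)^2))
      + (q^2/p^2) * 2 * (∑ k ∈ range (d+1), ((k:ℝ) - (d:ℝ)*p) * W p q d k * (1/((k:ℝ)+q))) < 0 := by
    rw [hB]
    have hAq : q^2 * (∑ k ∈ range (d+1), W p q d k * (1/((k:ℝ)+q)^2)) ≤ q^2 * (2*S) :=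
      mul_le_mul_of_nonneg_left hA (sq_nonneg q)
    have hlt : (q - (d:ℝ)*p) * (q * S) < 0 :=
      mul_neg_of_neg_of_pos (by linarith) (mul_pos hq hS)
    have hpp : (0:ℝ) < q^2/p^2 := by positivity
    nlinarith [hAq, hlt, hpp, mul_pos hpp (mul_pos hq hS)]
  linarith [hneg]

/-- Reduce the integral of a function of a binomial-with-bounded-support variable
to a finite sum. -/
lemma integral_eq_sum {Ω : Type*} [MeasureSpace Ω] [IsProbabilityMeasure (ℙ : Measure Ω)]
    (X : Ω → ℕ) (hX : Measurable X) (d : ℕ)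
    (hnull : ∀ k, d < k → ℙ {ω | X ω = k} = 0) (f : ℕ → ℝ) :
    ∫ ω, f (X ω) = ∑ k ∈ range (d+1), f k * (ℙ {ω | X ω = k}).toReal := by
  have hmeas : ∀ k : ℕ, MeasurableSet {ω | X ω = k} := fun k =>
    hX (measurableSet_singleton k)
  have hae : ∀ᵐ ω ∂(ℙ : Measure Ω), X ω < d + 1 := by
    rw [ae_iff]
    refine measure_mono_null (fun ω hω => ?_) (measure_iUnion_null
      (fun k : ℕ => hnull (d+1+k) (by omega)))
    simp only [Set.mem_setOf_eq, not_lt] at hω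
    exact Set.mem_iUnion.mpr ⟨X ω - (d+1), by simp only [Set.mem_setOf_eq]; omega⟩
  have heq : (fun ω => f (X ω)) =ᵐ[(ℙ : Measure Ω)]
      (fun ω => ∑ k ∈ range (d+1), Set.indicator {ω' | X ω' = k} (fun _ => f k) ω) := by
    filter_upwards [hae] with ω hω
    rw [Finset.sum_congr rfl (fun k _ => Set.indicator_apply _ _ _)]
    simp only [Set.mem_setOf_eq]
    rw [Finset.sum_ite_eq (range (d+1)) (X ω) f]
    simp [Finset.mem_range.mpr hω]
  rw [integral_congr_ae heq, integral_finset_sum _ (fun k _ =>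
    (integrable_const (f k)).indicator (hmeas k))]
  refine Finset.sum_congr rfl fun k _ => ?_
  rw [integral_indicator_const _ (hmeas k), smul_eq_mul, mul_comm, measureReal_def]

end Stmt3Aux

open Stmt3Aux in
/-- For `X ~ Binomial(d, p)` with `0 < p < 1` and true degree `d > (1-p)/p`, the
bias-corrected plug-in univariate risk minimizer `T(X) = X²/(p(X+1-p)) + (1-p)/p`
has strictly smaller quadratic risk than the MME `X/p`, whose risk is `(1-p)d/p`. -/
theorem stmt3 {Ω : Type*} [MeasureSpace Ω] [IsProbabilityMeasure (ℙ : Measure Ω)]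
    (p : ℝ) (hp : p ∈ Set.Ioo (0 : ℝ) 1) (d : ℕ) (hd : (1 - p) / p < (d : ℝ))
    (X : Ω → ℕ) (hX : Measurable X)
    (hdist : ∀ k : ℕ, (ℙ {ω | X ω = k}).toReal = (d.choose k : ℝ) * p ^ k * (1 - p) ^ (d - k)) :
    (∫ ω, ((X ω : ℝ) ^ 2 / (p * ((X ω : ℝ) + 1 - p)) + (1 - p) / p - (d : ℝ)) ^ 2)
        < (∫ ω, ((X ω : ℝ) / p - (d : ℝ)) ^ 2) ∧
    (∫ ω, ((X ω : ℝ) / p - (d : ℝ)) ^ 2) = (1 - p) * d / p := by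
  obtain ⟨hp0, hp1⟩ := hp
  have hq : 0 < 1 - p := by linarith
  have hqp : p + (1 - p) = 1 := by ring
  have hdpos : (0:ℝ) < (d:ℝ) := lt_trans (div_pos hq hp0) hd
  have hd0 : 0 < d := by exact_mod_cast hdpos
  have hdp : 1 - p < (d:ℝ) * p := by
    rw [div_lt_iff₀ hp0] at hd; linarith
  have hnull : ∀ k, d < k → ℙ {ω | X ω = k} = 0 := by
    intro k hk
    have h := hdist k
    rw [Nat.choose_eq_zero_of_lt hk] at h
    simp only [Nat.cast_zero, zero_mul] at h
    exact ((ENNReal.toReal_eq_zero_iff _).mp h).resolve_right (measure_ne_top _ _)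
  have e1 : (∫ ω, ((X ω : ℝ) / p - (d : ℝ)) ^ 2)
      = ∑ k ∈ range (d+1), ((k:ℝ)/p - (d:ℝ))^2 * (ℙ {ω | X ω = k}).toReal :=
    integral_eq_sum X hX d hnull (fun k => ((k:ℝ)/p - (d:ℝ))^2)
  have e2 : (∫ ω, ((X ω : ℝ) ^ 2 / (p * ((X ω : ℝ) + 1 - p)) + (1 - p) / p - (d : ℝ)) ^ 2)
      = ∑ k ∈ range (d+1),
          ((k:ℝ)^2/(p*((k:ℝ)+1-p)) + (1-p)/p - (d:ℝ))^2 * (ℙ {ω | X ω = k}).toReal :=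
    integral_eq_sum X hX d hnull
      (fun k => ((k:ℝ)^2/(p*((k:ℝ)+1-p)) + (1-p)/p - (d:ℝ))^2)
  have hW1 : ∑ k ∈ range (d+1), ((k:ℝ)/p - (d:ℝ))^2 * (ℙ {ω | X ω = k}).toReal
      = ∑ k ∈ range (d+1), ((k:ℝ)/p - (d:ℝ))^2 * W p (1-p) d k :=
    Finset.sum_congr rfl fun k _ => by rw [hdist k]; rfl
  have hW2 : ∑ k ∈ range (d+1),
        ((k:ℝ)^2/(p*((k:ℝ)+1-p)) + (1-p)/p - (d:ℝ))^2 * (ℙ {ω | X ω = k}).toReal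
      = ∑ k ∈ range (d+1),
        ((k:ℝ)^2/(p*((k:ℝ)+(1-p))) + (1-p)/p - (d:ℝ))^2 * W p (1-p) d k :=
    Finset.sum_congr rfl fun k _ => by
      rw [hdist k]
      have h : ((k:ℝ)^2/(p*((k:ℝ)+1-p)) + (1-p)/p - (d:ℝ))^2
          = ((k:ℝ)^2/(p*((k:ℝ)+(1-p))) + (1-p)/p - (d:ℝ))^2 := by ring_nf
      rw [h]; rfl
  constructor
  · rw [e1, e2, hW1, hW2]
    exact key hp0 hq hqp d hd0 hdp
  · rw [e1, hW1, sum_A p (1-p) hp0.ne' hqp d]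
end

section
/- Let p ∈ (0,1), let d ∈ ℝⁿ, and let D be a symmetric positive-definite n×n real matrix. Then the matrix M = p² d dᵀ + p(1−p) D is positive definite (hence invertible), and the matrix A* = p · d dᵀ M⁻¹ minimizes the function f(A) = ‖(pA − I)d‖² + p(1−p)·tr(A D Aᵀ) over all n×n real matrices A; that is, f(A*) ≤ f(A) for every n×n real matrix A. -/
open Matrix

lemma aux_trace_mul_vmv {m : Type*} [Fintype m] (B : Matrix m m ℝ) (d : m → ℝ) :
    (B * vecMulVec d d).trace = d ⬝ᵥ B *ᵥ d := by
  simp only [Matrix.trace, Matrix.diag, Matrix.mul_apply, vecMulVec_apply, dotProduct, mulVec,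
    Finset.mul_sum, Finset.sum_mul]
  exact Finset.sum_congr rfl fun j _ => Finset.sum_congr rfl fun i _ => by ring

lemma aux_quadform_vmv {m : Type*} [Fintype m] (d x : m → ℝ) :
    x ⬝ᵥ (vecMulVec d d *ᵥ x) = (d ⬝ᵥ x) ^ 2 := by
  simp only [dotProduct, mulVec, vecMulVec_apply, Finset.mul_sum, sq, Finset.sum_mul]
  exact Finset.sum_congr rfl fun i _ => Finset.sum_congr rfl fun j _ => by ring

lemma aux_trace_CMCt_nonneg {m : Type*} [Fintype m] [DecidableEq m] (C M : Matrix m m ℝ)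
    (hM : M.PosSemidef) : 0 ≤ (C * M * Cᵀ).trace := by
  have h : (C * M * Cᵀ).trace = ∑ i, (C i) ⬝ᵥ (M *ᵥ C i) := by
    simp only [Matrix.trace, Matrix.diag, Matrix.mul_apply, transpose_apply, dotProduct, mulVec,
      Finset.mul_sum, Finset.sum_mul]
    refine Finset.sum_congr rfl fun i _ => ?_
    rw [Finset.sum_comm]
    exact Finset.sum_congr rfl fun j _ => Finset.sum_congr rfl fun k _ => by ring
  rw [h]
  refine Finset.sum_nonneg fun i _ => ?_
  simpa using hM.dotProduct_mulVec_nonneg (C i)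

lemma aux_vmv_transpose {m : Type*} [Fintype m] (d : m → ℝ) :
    (vecMulVec d d)ᵀ = vecMulVec d d := by
  ext i j; simp [vecMulVec_apply, mul_comm]

/-- For `0 < p < 1`, `d ∈ ℝⁿ` and `D` symmetric positive definite, the matrix
`M = p² d dᵀ + p(1-p) D` is positive definite (hence invertible), and
`A* = p d dᵀ M⁻¹` minimizes the total quadratic risk
`f(A) = ‖(pA - I)d‖² + p(1-p) tr(A D Aᵀ)` over all `n × n` matrices `A`. -/
theorem stmt5 (n : ℕ) (p : ℝ) (hp : p ∈ Set.Ioo (0 : ℝ) 1) (d : Fin n → ℝ)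
    (D : Matrix (Fin n) (Fin n) ℝ) (hD : D.PosDef)
    (f : Matrix (Fin n) (Fin n) ℝ → ℝ)
    (hf : ∀ A, f A = (∑ i, ((p • A - 1).mulVec d i) ^ 2) + p * (1 - p) * (A * D * Aᵀ).trace) :
    (p ^ 2 • vecMulVec d d + (p * (1 - p)) • D).PosDef ∧
    IsUnit (p ^ 2 • vecMulVec d d + (p * (1 - p)) • D) ∧
    ∀ A, f (p • (vecMulVec d d * (p ^ 2 • vecMulVec d d + (p * (1 - p)) • D)⁻¹)) ≤ f A := by
  obtain ⟨hp0, hp1⟩ := hp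
  have hpp : 0 < p * (1 - p) := by nlinarith
  have hMpd : (p ^ 2 • vecMulVec d d + (p * (1 - p)) • D).PosDef := by
    rw [posDef_iff_dotProduct_mulVec]
    constructor
    · ext i j
      simp only [conjTranspose_apply, Matrix.add_apply, Matrix.smul_apply, vecMulVec_apply, smul_eq_mul,
        star_trivial]
      have hsym : D j i = D i j := by simpa using hD.1.apply i j
      rw [mul_comm (d j) (d i), hsym]
    · intro x hx
      rw [show (star x) = x from funext fun i => star_trivial _, add_mulVec, dotProduct_add,
        smul_mulVec, smul_mulVec, dotProduct_smul, dotProduct_smul, aux_quadform_vmv]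
      have hDx := hD.dotProduct_mulVec_pos hx
      rw [show (star x) = x from funext fun i => star_trivial _] at hDx
      have h1 : (0:ℝ) ≤ p ^ 2 • (d ⬝ᵥ x) ^ 2 := by positivity
      have h2 : (0:ℝ) < (p * (1 - p)) • (x ⬝ᵥ D *ᵥ x) := by
        rw [smul_eq_mul]; exact mul_pos hpp hDx
      linarith
  refine ⟨hMpd, hMpd.isUnit, ?_⟩
  set M : Matrix (Fin n) (Fin n) ℝ := p ^ 2 • vecMulVec d d + (p * (1 - p)) • D with hMdef
  set A0 : Matrix (Fin n) (Fin n) ℝ := p • (vecMulVec d d * M⁻¹) with hA0def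
  have hdet : IsUnit M.det := isUnit_iff_ne_zero.2 hMpd.det_pos.ne'
  have hA0M : A0 * M = p • vecMulVec d d := by
    rw [hA0def, Matrix.smul_mul, mul_assoc, nonsing_inv_mul M hdet, mul_one]
  have hMsymm : Mᵀ = M := by
    have h := hMpd.1
    rwa [Matrix.IsHermitian, conjTranspose_eq_transpose_of_trivial] at h
  have h3 : ∀ B : Matrix (Fin n) (Fin n) ℝ,
      (B * vecMulVec d d * Bᵀ).trace = (B *ᵥ d) ⬝ᵥ (B *ᵥ d) := by
    intro B
    rw [trace_mul_comm, ← mul_assoc, aux_trace_mul_vmv, ← mulVec_mulVec,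
      dotProduct_mulVec, vecMul_transpose]
  have hexp : ∀ B : Matrix (Fin n) (Fin n) ℝ,
      f B = (B * M * Bᵀ).trace - 2 * p * (d ⬝ᵥ B *ᵥ d) + d ⬝ᵥ d := by
    intro B
    rw [hf B]
    have h1 : (p • B - 1) *ᵥ d = p • (B *ᵥ d) - d := by
      rw [sub_mulVec, smul_mulVec, one_mulVec]
    have h2 : ∑ i, ((p • B - 1).mulVec d i) ^ 2
        = (p • (B *ᵥ d) - d) ⬝ᵥ (p • (B *ᵥ d) - d) := by
      rw [h1]; simp [dotProduct, sq]
    have h4 : (B * M * Bᵀ).trace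
        = p ^ 2 * ((B *ᵥ d) ⬝ᵥ (B *ᵥ d)) + p * (1 - p) * (B * D * Bᵀ).trace := by
      have : B * M * Bᵀ = p ^ 2 • (B * vecMulVec d d * Bᵀ) + (p * (1 - p)) • (B * D * Bᵀ) := by
        rw [hMdef, mul_add, Matrix.mul_smul, Matrix.mul_smul, add_mul, Matrix.smul_mul,
          Matrix.smul_mul]
      rw [this, trace_add, trace_smul, trace_smul, smul_eq_mul, smul_eq_mul, h3 B]
    rw [h2, h4]
    have hcomm : (B *ᵥ d) ⬝ᵥ d = d ⬝ᵥ (B *ᵥ d) := dotProduct_comm _ _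
    simp only [dotProduct_sub, sub_dotProduct, dotProduct_smul, smul_dotProduct, smul_eq_mul]
    rw [hcomm]; ring
  have hcross1 : ∀ B : Matrix (Fin n) (Fin n) ℝ,
      (A0 * M * Bᵀ).trace = p * (d ⬝ᵥ B *ᵥ d) := by
    intro B
    rw [hA0M, Matrix.smul_mul, trace_smul, trace_mul_comm, aux_trace_mul_vmv, smul_eq_mul,
      dotProduct_mulVec, vecMul_transpose, dotProduct_comm]
  have hcross2 : ∀ B : Matrix (Fin n) (Fin n) ℝ,
      (B * M * A0ᵀ).trace = p * (d ⬝ᵥ B *ᵥ d) := by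
    intro B
    have hMA0t : M * A0ᵀ = p • vecMulVec d d := by
      calc M * A0ᵀ = (A0 * Mᵀ)ᵀ := by rw [transpose_mul, transpose_transpose]
        _ = (A0 * M)ᵀ := by rw [hMsymm]
        _ = p • vecMulVec d d := by rw [hA0M, transpose_smul, aux_vmv_transpose]
    rw [mul_assoc, hMA0t, Matrix.mul_smul, trace_smul, aux_trace_mul_vmv, smul_eq_mul]
  have hA0Q : (A0 * M * A0ᵀ).trace = p * (d ⬝ᵥ A0 *ᵥ d) := hcross1 A0
  intro A
  have hdiff : f A - f A0 = ((A - A0) * M * (A - A0)ᵀ).trace := by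
    rw [hexp A, hexp A0]
    have : (A - A0) * M * (A - A0)ᵀ
        = A * M * Aᵀ - A * M * A0ᵀ - (A0 * M * Aᵀ - A0 * M * A0ᵀ) := by
      rw [transpose_sub, sub_mul, sub_mul, mul_sub, mul_sub]
    rw [this, trace_sub, trace_sub, trace_sub, hcross1 A, hcross2 A, hA0Q]
    ring
  have hnn : 0 ≤ ((A - A0) * M * (A - A0)ᵀ).trace :=
    aux_trace_CMCt_nonneg (A - A0) M hMpd.posSemidef
  linarith [hdiff ▸ hnn]
end

section
/- Let p > 0, let d ∈ ℝⁿ, and let D be a symmetric positive-definite n×n real matrix. Then d dᵀ + D is positive definite (hence invertible), and (1/p)· d dᵀ (d dᵀ + D)⁻¹ d = (s/p)· d, where s = dᵀD⁻¹d / (1 + dᵀD⁻¹d) ∈ [0, 1). In particular, the plug-in multivariate risk minimizer (1/p) d dᵀ (d dᵀ + D)⁻¹ d is a shrinkage of the method of moments vector d/p by a scalar factor strictly less than 1. -/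
open Matrix

lemma vecMulVec_mulVec' {n : ℕ} (d v : Fin n → ℝ) :
    (vecMulVec d d).mulVec v = (d ⬝ᵥ v) • d := by
  funext i
  simp only [mulVec, dotProduct, vecMulVec_apply, Pi.smul_apply, smul_eq_mul,
    Finset.sum_mul]
  exact Finset.sum_congr rfl fun j _ => by ring

lemma vecMulVec_posSemidef {n : ℕ} (d : Fin n → ℝ) :
    (vecMulVec d d).PosSemidef := by
  refine Matrix.PosSemidef.of_dotProduct_mulVec_nonneg ?_ fun x => ?_
  · ext i j
    simp [vecMulVec_apply, conjTranspose, mul_comm]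
  · have : star x ⬝ᵥ (vecMulVec d d).mulVec x = (d ⬝ᵥ x) * (d ⬝ᵥ x) := by
      rw [vecMulVec_mulVec', dotProduct_smul]
      simp only [star_trivial, smul_eq_mul]
      rw [mul_comm, dotProduct_comm]
    rw [this]
    exact mul_self_nonneg _

/-- For `p > 0`, `d ∈ ℝⁿ` and `D` symmetric positive definite, `d dᵀ + D` is positive
definite (hence invertible), and the plug-in multivariate risk minimizer
`(1/p) d dᵀ (d dᵀ + D)⁻¹ d` equals `(s/p) d` where
`s = dᵀ D⁻¹ d / (1 + dᵀ D⁻¹ d) ∈ [0,1)`: a shrinkage of the MME vector `d/p`. -/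
theorem stmt6 (n : ℕ) (p : ℝ) (hp : 0 < p) (d : Fin n → ℝ)
    (D : Matrix (Fin n) (Fin n) ℝ) (hD : D.PosDef) :
    (vecMulVec d d + D).PosDef ∧
    IsUnit (vecMulVec d d + D) ∧
    (d ⬝ᵥ D⁻¹.mulVec d) / (1 + d ⬝ᵥ D⁻¹.mulVec d) ∈ Set.Ico (0 : ℝ) 1 ∧
    (1 / p) • (vecMulVec d d * (vecMulVec d d + D)⁻¹).mulVec d
      = (((d ⬝ᵥ D⁻¹.mulVec d) / (1 + d ⬝ᵥ D⁻¹.mulVec d)) / p) • d := by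
  set q : ℝ := d ⬝ᵥ D⁻¹.mulVec d with hq
  have hDinv : D⁻¹.PosDef := hD.inv
  have hq0 : 0 ≤ q := by
    have := hDinv.posSemidef.re_dotProduct_nonneg d
    simpa using this
  have h1q : (0 : ℝ) < 1 + q := by linarith
  have hA : (vecMulVec d d + D).PosDef := Matrix.PosDef.posSemidef_add (vecMulVec_posSemidef d) hD
  have hAunit : IsUnit (vecMulVec d d + D) :=
    (Matrix.isUnit_iff_isUnit_det _).mpr (isUnit_iff_ne_zero.mpr (ne_of_gt hA.det_pos))
  refine ⟨hA, ?_, ⟨div_nonneg hq0 h1q.le, by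
    rw [div_lt_one h1q]; linarith⟩, ?_⟩
  · exact (Matrix.isUnit_iff_isUnit_det _).mpr (isUnit_iff_ne_zero.mpr (ne_of_gt hA.det_pos))
  · -- key: (vecMulVec d d + D)⁻¹.mulVec d = (1/(1+q)) • D⁻¹.mulVec d
    have hDdet : IsUnit D.det := isUnit_iff_ne_zero.mpr (ne_of_gt hD.det_pos)
    have hAdet : IsUnit (vecMulVec d d + D).det := isUnit_iff_ne_zero.mpr (ne_of_gt hA.det_pos)
    have hkey : (vecMulVec d d + D).mulVec ((1 / (1 + q)) • D⁻¹.mulVec d) = d := by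
      rw [mulVec_smul, add_mulVec, vecMulVec_mulVec', mulVec_mulVec,
        Matrix.mul_nonsing_inv D hDdet, one_mulVec, ← hq, smul_add, smul_smul, ← add_smul,
        show 1 / (1 + q) * q + 1 / (1 + q) = 1 by field_simp; ring, one_smul]
    have hinv : (vecMulVec d d + D)⁻¹.mulVec d = (1 / (1 + q)) • D⁻¹.mulVec d := by
      have := congrArg (fun v => (vecMulVec d d + D)⁻¹.mulVec v) hkey
      simpa [mulVec_mulVec, Matrix.nonsing_inv_mul _ hAdet, one_mulVec] using this.symm
    rw [← mulVec_mulVec, hinv, mulVec_smul, vecMulVec_mulVec', ← hq]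
    rw [smul_smul, smul_smul]
    congr 1
    ring
end

section
/- Let p ∈ (0,1), x ∈ ℕ, ε > 0, and let π, π̂ : ℕ → [0,∞) satisfy sup_{d ∈ ℕ} |π̂(d) − π(d)| < ε. Then | Σ_{d ≥ x} d·C(d,x)(1−p)^d π̂(d) − Σ_{d ≥ x} d·C(d,x)(1−p)^d π(d) | < ε (1−p)^x (x + 1 − p) / p^{x+2}. -/
private lemma choose_hasSum (p : ℝ) (hp : p ∈ Set.Ioo (0 : ℝ) 1) (k : ℕ) :
    HasSum (fun d : ℕ => (d.choose k : ℝ) * (1 - p) ^ d) ((1 - p) ^ k / p ^ (k + 1)) := by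
  obtain ⟨hp0, hp1⟩ := hp
  have hq : ‖(1 - p : ℝ)‖ < 1 := by
    rw [Real.norm_eq_abs, abs_of_nonneg (by linarith)]; linarith
  have h := (hasSum_choose_mul_geometric_of_norm_lt_one (𝕜 := ℝ) k hq).mul_left ((1 - p) ^ k)
  have heq : (fun n : ℕ => (1 - p) ^ k * (((n + k).choose k : ℝ) * (1 - p) ^ n))
      = fun n : ℕ => ((n + k).choose k : ℝ) * (1 - p) ^ (n + k) := by
    funext n; rw [pow_add]; ring
  rw [heq] at h
  have h2 := (hasSum_nat_add_iff (f := fun d : ℕ => (d.choose k : ℝ) * (1 - p) ^ d) k).mp h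
  have hz : ∑ i ∈ Finset.range k, ((i.choose k : ℝ) * (1 - p) ^ i) = 0 := by
    apply Finset.sum_eq_zero
    intro i hi
    rw [Nat.choose_eq_zero_of_lt (Finset.mem_range.mp hi)]
    simp
  rw [hz, add_zero] at h2
  convert h2 using 1
  case e'_3 => rfl
  rw [sub_sub_cancel]
  ring

private lemma main_hasSum (p : ℝ) (hp : p ∈ Set.Ioo (0 : ℝ) 1) (x : ℕ) :
    HasSum (fun d : ℕ => (d : ℝ) * (d.choose x : ℝ) * (1 - p) ^ d)
      ((1 - p) ^ x * ((x : ℝ) + 1 - p) / p ^ (x + 2)) := by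
  obtain ⟨hp0, hp1⟩ := hp
  have h1 := (choose_hasSum p ⟨hp0, hp1⟩ x).mul_left (x : ℝ)
  have h2 := (choose_hasSum p ⟨hp0, hp1⟩ (x + 1)).mul_left ((x : ℝ) + 1)
  have h := h1.add h2
  have heq : (fun d : ℕ => (x : ℝ) * ((d.choose x : ℝ) * (1 - p) ^ d)
        + ((x : ℝ) + 1) * ((d.choose (x + 1) : ℝ) * (1 - p) ^ d))
      = fun d : ℕ => (d : ℝ) * (d.choose x : ℝ) * (1 - p) ^ d := by
    funext d
    have hn : d * d.choose x = x * d.choose x + (x + 1) * d.choose (x + 1) := by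
      rcases le_or_gt x d with hxd | hxd
      · have := Nat.choose_succ_right_eq d x
        rw [mul_comm (x + 1), this, mul_comm x]
        rw [← Nat.mul_add, Nat.add_sub_cancel' hxd, mul_comm]
      · rw [Nat.choose_eq_zero_of_lt hxd, Nat.choose_eq_zero_of_lt (by omega)]
        simp
    have hr : (d : ℝ) * (d.choose x : ℝ)
        = (x : ℝ) * (d.choose x : ℝ) + ((x : ℝ) + 1) * (d.choose (x + 1) : ℝ) := by
      exact_mod_cast congrArg (Nat.cast : ℕ → ℝ) hn
    rw [← mul_assoc ((x:ℝ)+1), ← mul_assoc (x:ℝ), ← add_mul, ← hr]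
  rw [heq] at h
  convert h using 1
  case e'_3 => rfl
  have hp0' : p ^ (x + 2) ≠ 0 := pow_ne_zero _ (ne_of_gt hp0)
  have hp1' : (p : ℝ) ^ (x + 1) ≠ 0 := pow_ne_zero _ (ne_of_gt hp0)
  field_simp
  ring

private lemma abs_tsum_le' {g : ℕ → ℝ} (h : Summable fun n => |g n|) :
    |∑' n, g n| ≤ ∑' n, |g n| := by
  have h' : Summable fun n => ‖g n‖ := by simpa only [Real.norm_eq_abs] using h
  have h2 := norm_tsum_le_tsum_norm h'
  simpa only [Real.norm_eq_abs] using h2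

set_option maxHeartbeats 1000000 in
/-- If the priors `π` and `π̂` (nonnegative functions on ℕ) satisfy
`sup_d |π̂(d) - π(d)| < ε`, then the numerators of the Bayes and empirical Bayes
estimators differ by less than `ε (1-p)^x (x+1-p) / p^(x+2)`. (Binomial coefficients
`C(d,x)` vanish for `d < x`, so the sums `Σ_{d ≥ x}` are over all `d ∈ ℕ`.) -/
theorem stmt12 (p : ℝ) (hp : p ∈ Set.Ioo (0 : ℝ) 1) (x : ℕ) (ε : ℝ) (hε : 0 < ε)
    (π πh : ℕ → ℝ) (hπ0 : ∀ d, 0 ≤ π d) (hπh0 : ∀ d, 0 ≤ πh d)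
    (hclose : ∀ d : ℕ, |πh d - π d| < ε) :
    |(∑' d : ℕ, (d : ℝ) * (d.choose x : ℝ) * (1 - p) ^ d * πh d)
        - ∑' d : ℕ, (d : ℝ) * (d.choose x : ℝ) * (1 - p) ^ d * π d|
      < ε * (1 - p) ^ x * ((x : ℝ) + 1 - p) / p ^ (x + 2) := by
  obtain ⟨hp0, hp1⟩ := hp
  set f : ℕ → ℝ := fun d => (d : ℝ) * (d.choose x : ℝ) * (1 - p) ^ d with hf
  have hq0 : (0 : ℝ) < 1 - p := by linarith
  have hf0 : ∀ d, 0 ≤ f d := fun d => by positivity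
  set S : ℝ := (1 - p) ^ x * ((x : ℝ) + 1 - p) / p ^ (x + 2) with hS
  have hSsum : HasSum f S := main_hasSum p ⟨hp0, hp1⟩ x
  have hSpos : 0 < S := by
    apply div_pos
    · apply mul_pos (pow_pos hq0 x); have : (0:ℝ) ≤ x := Nat.cast_nonneg x; linarith
    · exact pow_pos hp0 _
  have hRHS : ε * (1 - p) ^ x * ((x : ℝ) + 1 - p) / p ^ (x + 2) = ε * S := by
    rw [hS]; ring
  rw [hRHS]
  -- summability of the dominating series ε • f
  have hεf : Summable (fun d => f d * ε) := hSsum.summable.mul_right ε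
  -- summability of the "difference" series
  have hδ : Summable (fun d => f d * (πh d - π d)) := by
    apply Summable.of_abs
    apply Summable.of_nonneg_of_le (fun d => abs_nonneg _) _ hεf
    intro d
    rw [abs_mul, abs_of_nonneg (hf0 d)]
    exact mul_le_mul_of_nonneg_left (le_of_lt (hclose d)) (hf0 d)
  by_cases hsum : Summable (fun d => f d * π d)
  · have hsum' : Summable (fun d => f d * πh d) := by
      have := hsum.add hδ
      convert this using 1; funext d; ring
    have hkey : (∑' d, f d * πh d) - (∑' d, f d * π d) = ∑' d, f d * (πh d - π d) := by
      rw [← Summable.tsum_sub hsum' hsum]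
      congr 1; funext d; ring
    have hLHS : (∑' d : ℕ, (d : ℝ) * (d.choose x : ℝ) * (1 - p) ^ d * πh d)
        - (∑' d : ℕ, (d : ℝ) * (d.choose x : ℝ) * (1 - p) ^ d * π d)
        = ∑' d, f d * (πh d - π d) := hkey
    rw [hLHS]
    have habs : Summable (fun d => |f d * (πh d - π d)|) := by
      apply Summable.of_nonneg_of_le (fun d => abs_nonneg _) _ hεf
      intro d
      rw [abs_mul, abs_of_nonneg (hf0 d)]
      exact mul_le_mul_of_nonneg_left (le_of_lt (hclose d)) (hf0 d)
    calc |∑' d, f d * (πh d - π d)| ≤ ∑' d, |f d * (πh d - π d)| :=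
          abs_tsum_le' habs
      _ < ∑' d, f d * ε := by
          apply Summable.tsum_lt_tsum_of_nonneg (i := x + 1) (fun d => abs_nonneg _)
          · intro d
            rw [abs_mul, abs_of_nonneg (hf0 d)]
            exact mul_le_mul_of_nonneg_left (le_of_lt (hclose d)) (hf0 d)
          · rw [abs_mul, abs_of_nonneg (hf0 (x + 1))]
            have hfpos : 0 < f (x + 1) := by
              have h1 : ((x + 1 : ℕ) : ℝ) * ((x + 1).choose x : ℝ) * (1 - p) ^ (x + 1) = f (x+1) := rfl
              rw [hf]
              have : (0:ℝ) < ((x + 1 : ℕ) : ℝ) := by positivity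
              apply mul_pos (mul_pos this _) (pow_pos hq0 _)
              rw [Nat.choose_succ_self_right]
              positivity
            exact (mul_lt_mul_iff_right₀ hfpos).mpr (hclose (x + 1))
          · exact hεf
      _ = S * ε := hSsum.summable.tsum_mul_right ε ▸ by rw [hSsum.tsum_eq]
      _ = ε * S := mul_comm _ _
  · have hsum' : ¬ Summable (fun d => f d * πh d) := by
      intro h
      apply hsum
      have := h.sub hδ
      convert this using 1
      case e'_3 => rfl
      funext d; ring
    have e1 : (∑' d : ℕ, (d : ℝ) * (d.choose x : ℝ) * (1 - p) ^ d * πh d) = 0 :=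
      tsum_eq_zero_of_not_summable hsum'
    have e2 : (∑' d : ℕ, (d : ℝ) * (d.choose x : ℝ) * (1 - p) ^ d * π d) = 0 :=
      tsum_eq_zero_of_not_summable hsum
    rw [e1, e2, sub_zero, abs_zero]
    exact mul_pos hε hSpos
end

section
/- Let p ∈ (0,1), λ > 0, and let d ∈ ℕ satisfy λ + ((1+p)/p)(1/2 − √(λp/(1+p) + 1/4)) ≤ d ≤ λ + ((1+p)/p)(1/2 + √(λp/(1+p) + 1/4)) (equivalently, (λ − d)² ≤ d(1+p)/p). Let X be a binomial random variable with parameters d and p. Then E[(X + λ(1−p) − d)²] ≤ E[(X/p − d)²] = (1−p)d/p; that is, the quadratic risk of the Bayes estimator X + λ(1−p) arising from a Poisson(λ) prior is at most that of the method of moments estimator X/p. -/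
open MeasureTheory ProbabilityTheory Finset

private lemma bin_sum0 (d : ℕ) (x y : ℝ) :
    ∑ k ∈ range (d + 1), (d.choose k : ℝ) * x ^ k * y ^ (d - k) = (x + y) ^ d := by
  rw [add_pow]
  exact Finset.sum_congr rfl fun k _ => by ring

private lemma cast_choose_succ (n i : ℕ) :
    ((i : ℝ) + 1) * ((n + 1).choose (i + 1) : ℝ) = ((n : ℝ) + 1) * (n.choose i : ℝ) := by
  have h := Nat.add_one_mul_choose_eq n i
  have h' := congrArg (fun m : ℕ => (m : ℝ)) h
  push_cast at h'
  linarith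

private lemma bin_sum1 (d : ℕ) (x y : ℝ) :
    ∑ k ∈ range (d + 1), (k : ℝ) * ((d.choose k : ℝ) * x ^ k * y ^ (d - k))
      = d * x * (x + y) ^ (d - 1) := by
  cases d with
  | zero => simp
  | succ n =>
    rw [Finset.sum_range_succ']
    simp only [Nat.cast_zero, zero_mul, add_zero]
    have key : ∀ i ∈ range (n + 1),
        ((i + 1 : ℕ) : ℝ) * (((n + 1).choose (i + 1) : ℝ) * x ^ (i + 1) * y ^ (n + 1 - (i + 1)))
          = ((n : ℝ) + 1) * x * ((n.choose i : ℝ) * x ^ i * y ^ (n - i)) := by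
      intro i _
      have hsub : n + 1 - (i + 1) = n - i := by omega
      rw [hsub]
      push_cast
      linear_combination (x ^ (i + 1) * y ^ (n - i)) * cast_choose_succ n i
    rw [Finset.sum_congr rfl key, ← Finset.mul_sum, bin_sum0]
    push_cast
    ring

private lemma bin_sum2 (d : ℕ) (x y : ℝ) :
    ∑ k ∈ range (d + 1), (k : ℝ) * ((k : ℝ) - 1) * ((d.choose k : ℝ) * x ^ k * y ^ (d - k))
      = d * ((d : ℝ) - 1) * x ^ 2 * (x + y) ^ (d - 2) := by
  cases d with
  | zero => simp
  | succ n =>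
    rw [Finset.sum_range_succ']
    simp only [Nat.cast_zero, zero_mul, add_zero]
    have key : ∀ i ∈ range (n + 1),
        ((i + 1 : ℕ) : ℝ) * (((i + 1 : ℕ) : ℝ) - 1) *
            (((n + 1).choose (i + 1) : ℝ) * x ^ (i + 1) * y ^ (n + 1 - (i + 1)))
          = ((n : ℝ) + 1) * x * ((i : ℝ) * ((n.choose i : ℝ) * x ^ i * y ^ (n - i))) := by
      intro i _
      have hsub : n + 1 - (i + 1) = n - i := by omega
      rw [hsub]
      push_cast
      linear_combination ((i : ℝ) * x ^ (i + 1) * y ^ (n - i)) * cast_choose_succ n i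
    rw [Finset.sum_congr rfl key, ← Finset.mul_sum, bin_sum1]
    have hsub2 : n + 1 - 2 = n - 1 := by omega
    rw [hsub2]
    push_cast
    ring

private lemma integral_comp_eq_sum {Ω : Type*} [MeasureSpace Ω]
    [IsProbabilityMeasure (ℙ : Measure Ω)] (d : ℕ) (X : Ω → ℕ) (hX : Measurable X)
    (hnull : (ℙ : Measure Ω) {ω | d < X ω} = 0) (f : ℕ → ℝ) :
    (∫ ω, f (X ω)) = ∑ k ∈ range (d + 1), (ℙ {ω | X ω = k}).toReal * f k := by
  set ν : Measure ℕ := Measure.map X ℙ with hν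
  have hνprob : IsProbabilityMeasure ν := Measure.isProbabilityMeasure_map hX.aemeasurable
  have hνsingle : ∀ k, ν {k} = ℙ {ω | X ω = k} := by
    intro k
    rw [hν, Measure.map_apply hX (measurableSet_singleton k)]
    rfl
  have hrestrict : ν.restrict (↑(range (d + 1)) : Set ℕ) = ν := by
    apply Measure.restrict_eq_self_of_ae_mem
    rw [ae_iff]
    have hset : {n : ℕ | ¬ n ∈ (↑(range (d + 1)) : Set ℕ)} = {n | d < n} := by
      ext n; simp [Nat.lt_succ_iff]
    rw [hset, hν, Measure.map_apply hX ((Set.to_countable _).measurableSet)]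
    exact hnull
  calc (∫ ω, f (X ω)) = ∫ n, f n ∂ν :=
        (integral_map hX.aemeasurable measurable_from_nat.aestronglyMeasurable).symm
    _ = ∫ n in (↑(range (d + 1)) : Set ℕ), f n ∂ν := by rw [hrestrict]
    _ = ∑ k ∈ range (d + 1), (ν {k}).toReal • f k := integral_finset _ IntegrableOn.finset
    _ = ∑ k ∈ range (d + 1), (ℙ {ω | X ω = k}).toReal * f k := by
        exact Finset.sum_congr rfl fun k _ => by rw [hνsingle, smul_eq_mul]

/-- Proposition 5 of the paper: for `X ~ Binomial(d, p)` with true degree `d` lying in the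
interval `λ + ((1+p)/p)(1/2 ∓ √(λp/(1+p) + 1/4))` around the prior mean `λ`, the quadratic
risk of the Bayes estimator `X + λ(1-p)` (arising from a `Poisson(λ)` prior) is at most
that of the MME `X/p`, whose risk is `(1-p)d/p`. -/
theorem stmt17 {Ω : Type*} [MeasureSpace Ω] [IsProbabilityMeasure (ℙ : Measure Ω)]
    (p : ℝ) (hp : p ∈ Set.Ioo (0 : ℝ) 1) (lam : ℝ) (hlam : 0 < lam) (d : ℕ)
    (hlo : lam + ((1 + p) / p) * (1 / 2 - Real.sqrt (lam * p / (1 + p) + 1 / 4)) ≤ (d : ℝ))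
    (hhi : (d : ℝ) ≤ lam + ((1 + p) / p) * (1 / 2 + Real.sqrt (lam * p / (1 + p) + 1 / 4)))
    (X : Ω → ℕ) (hX : Measurable X)
    (hdist : ∀ k : ℕ, (ℙ {ω | X ω = k}).toReal = (d.choose k : ℝ) * p ^ k * (1 - p) ^ (d - k)) :
    (∫ ω, ((X ω : ℝ) + lam * (1 - p) - (d : ℝ)) ^ 2)
        ≤ (∫ ω, ((X ω : ℝ) / p - (d : ℝ)) ^ 2) ∧
    (∫ ω, ((X ω : ℝ) / p - (d : ℝ)) ^ 2) = (1 - p) * d / p := by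
  obtain ⟨hp0, hp1⟩ := hp
  have h1p : (0 : ℝ) < 1 + p := by linarith
  -- the key deterministic inequality `(lam - d)^2 ≤ d (1+p)/p`
  set c : ℝ := (1 + p) / p with hcdef
  set s : ℝ := Real.sqrt (lam * p / (1 + p) + 1 / 4) with hsdef
  have hargs : (0 : ℝ) ≤ lam * p / (1 + p) + 1 / 4 := by positivity
  have hs2 : s ^ 2 = lam * p / (1 + p) + 1 / 4 := Real.sq_sqrt hargs
  have hcpos : 0 < c := by positivity
  have habs : ((d : ℝ) - (lam + c / 2)) ^ 2 ≤ (c * s) ^ 2 := by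
    apply sq_le_sq'
    · linarith
    · linarith
  have hc2s2 : (c * s) ^ 2 = c * lam + c ^ 2 / 4 := by
    rw [mul_pow, hs2, hcdef]
    field_simp
  have hkey : (lam - (d : ℝ)) ^ 2 ≤ (d : ℝ) * (1 + p) / p := by
    have hcd : (d : ℝ) * (1 + p) / p = c * d := by rw [hcdef]; ring
    rw [hcd]
    nlinarith [habs, hc2s2]
  -- the probability `X > d` is zero
  have hnull : (ℙ : Measure Ω) {ω | d < X ω} = 0 := by
    have hsub : {ω | d < X ω} ⊆ ⋃ k ∈ {k : ℕ | d < k}, {ω | X ω = k} := fun ω hω =>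
      Set.mem_biUnion hω rfl
    refine measure_mono_null hsub ?_
    rw [measure_biUnion_null_iff (Set.to_countable _)]
    intro k hk
    have h0 : (ℙ {ω | X ω = k}).toReal = 0 := by
      rw [hdist k, Nat.choose_eq_zero_of_lt hk]; simp
    rcases (ENNReal.toReal_eq_zero_iff _).mp h0 with h | h
    · exact h
    · exact absurd h (measure_ne_top _ _)
  -- abbreviation for the binomial weights
  set b : ℕ → ℝ := fun k => (d.choose k : ℝ) * p ^ k * (1 - p) ^ (d - k) with hb
  have hint : ∀ f : ℕ → ℝ, (∫ ω, f (X ω)) = ∑ k ∈ range (d + 1), f k * b k := by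
    intro f
    rw [integral_comp_eq_sum d X hX hnull f]
    exact Finset.sum_congr rfl fun k _ => by rw [hdist k, hb, mul_comm]
  -- binomial moments
  have hone : p + (1 - p) = 1 := by ring
  have hsum0 : ∑ k ∈ range (d + 1), b k = 1 := by
    have h := bin_sum0 d p (1 - p)
    rw [hone, one_pow] at h
    exact h
  have hsum1 : ∑ k ∈ range (d + 1), (k : ℝ) * b k = d * p := by
    have h := bin_sum1 d p (1 - p)
    rw [hone, one_pow, mul_one] at h
    exact h
  have hsum2 : ∑ k ∈ range (d + 1), (k : ℝ) * ((k : ℝ) - 1) * b k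
      = d * ((d : ℝ) - 1) * p ^ 2 := by
    have h := bin_sum2 d p (1 - p)
    rw [hone, one_pow, mul_one] at h
    exact h
  -- evaluate the MME risk
  have I2 : (∫ ω, ((X ω : ℝ) / p - (d : ℝ)) ^ 2) = (1 - p) * d / p := by
    have e := hint (fun k => ((k : ℝ) / p - (d : ℝ)) ^ 2)
    rw [e]
    have expand : ∀ k ∈ range (d + 1), ((k : ℝ) / p - (d : ℝ)) ^ 2 * b k
        = (1 / p ^ 2) * ((k : ℝ) * ((k : ℝ) - 1) * b k)
          + (1 / p ^ 2 - 2 * d / p) * ((k : ℝ) * b k) + (d : ℝ) ^ 2 * b k := by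
      intro k _
      field_simp
      ring
    rw [Finset.sum_congr rfl expand, Finset.sum_add_distrib, Finset.sum_add_distrib,
      ← Finset.mul_sum, ← Finset.mul_sum, ← Finset.mul_sum, hsum0, hsum1, hsum2]
    field_simp
    ring
  -- evaluate the Bayes risk
  have I1 : (∫ ω, ((X ω : ℝ) + lam * (1 - p) - (d : ℝ)) ^ 2)
      = d * p * (1 - p) + (1 - p) ^ 2 * (lam - (d : ℝ)) ^ 2 := by
    have e := hint (fun k => ((k : ℝ) + lam * (1 - p) - (d : ℝ)) ^ 2)
    rw [e]
    have expand : ∀ k ∈ range (d + 1), ((k : ℝ) + lam * (1 - p) - (d : ℝ)) ^ 2 * b k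
        = (k : ℝ) * ((k : ℝ) - 1) * b k
          + (1 + 2 * (lam * (1 - p) - (d : ℝ))) * ((k : ℝ) * b k)
          + (lam * (1 - p) - (d : ℝ)) ^ 2 * b k := by
      intro k _
      ring
    rw [Finset.sum_congr rfl expand, Finset.sum_add_distrib, Finset.sum_add_distrib,
      ← Finset.mul_sum, ← Finset.mul_sum, hsum0, hsum1, hsum2]
    ring
  refine ⟨?_, I2⟩
  rw [I1, I2]
  have hmul : (1 - p) ^ 2 * (lam - (d : ℝ)) ^ 2 ≤ (1 - p) ^ 2 * ((d : ℝ) * (1 + p) / p) :=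
    mul_le_mul_of_nonneg_left hkey (sq_nonneg _)
  have heq : (d : ℝ) * p * (1 - p) + (1 - p) ^ 2 * ((d : ℝ) * (1 + p) / p)
      = (1 - p) * d / p := by
    field_simp
    ring
  linarith
end
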